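/- For all d ≥ 0 and n ≥ 1, the number i_n of d-increasing d-ascent sequences of length n satisfies the recursion i_n = Σ_{k≥1} (-1)^{k-1} · binom(n - kd + d, k) · i_{n-k}, where i_0 = 1. -/

import Mathlib

set_option maxHeartbeats 1000000

/-- The set of d-increasing d-ascent sequences of length n, modeled as
functions `Fin n → ℕ` (0-indexed: `f i` is `a_{i+1}`): `a_1 = 0` and
`a_k - d < a_{k+1} ≤ k` (subtraction over ℤ) for `k ∈ [n-1]`. -/
def dIncSet (d n : ℕ) : Set (Fin n → ℕ) :=
  {f | (∀ h : 0 < n, f ⟨0, h⟩ = 0) ∧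
    ∀ (i : ℕ) (h : i + 1 < n),
      (f ⟨i, Nat.lt_of_succ_lt h⟩ : ℤ) - d < f ⟨i + 1, h⟩ ∧ f ⟨i + 1, h⟩ ≤ i + 1}

open Finset

namespace DIncAux

/-- count of sequences of length `m` -/
noncomputable def II (d m : ℕ) : ℕ := (dIncSet d m).ncard

/-- count of sequences of length `m` whose last value is `< w` (with `KK d 0 w = 1`). -/
noncomputable def KK (d : ℕ) : ℕ → ℕ → ℕ
  | 0, _ => 1
  | m + 1, w => {f ∈ dIncSet d (m + 1) | f (Fin.last m) < w}.ncard

lemma KK_zero (d w : ℕ) : KK d 0 w = 1 := rfl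

lemma KK_succ_def (d m w : ℕ) :
    KK d (m + 1) w = {f ∈ dIncSet d (m + 1) | f (Fin.last m) < w}.ncard := rfl

lemma dInc_finite (d n : ℕ) : (dIncSet d n).Finite := by
  apply Set.Finite.subset (Set.Finite.pi (fun _ : Fin n => Set.finite_Iic n))
  rintro f ⟨h0, h1⟩
  rw [Set.mem_pi]
  rintro ⟨iv, hi⟩ -
  rcases iv with _ | j
  · simp only [Set.mem_Iic, h0 hi]
    exact Nat.zero_le n
  · exact Set.mem_Iic.mpr (le_trans (h1 j hi).2 (by omega))

lemma last_le {d m : ℕ} {f : Fin (m + 1) → ℕ} (hf : f ∈ dIncSet d (m + 1)) :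
    f (Fin.last m) ≤ m := by
  obtain ⟨h0, h1⟩ := hf
  rcases m with _ | l
  · exact le_of_eq (h0 (by omega))
  · exact (h1 l (by omega)).2


/-- append `c` at the end of `g` -/
def snocN {n : ℕ} (g : Fin n → ℕ) (c : ℕ) : Fin (n + 1) → ℕ :=
  fun i => if h : i.val < n then g ⟨i.val, h⟩ else c

lemma snocN_lt {n : ℕ} (g : Fin n → ℕ) (c : ℕ) (i : ℕ) (p : i < n) (p2 : i < n + 1) :
    snocN g c ⟨i, p2⟩ = g ⟨i, p⟩ := dif_pos p

lemma snocN_last {n : ℕ} (g : Fin n → ℕ) (c : ℕ) (p2 : n < n + 1) :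
    snocN g c ⟨n, p2⟩ = c := dif_neg (lt_irrefl n)

lemma snocN_inj {n : ℕ} (c : ℕ) :
    Function.Injective (fun g : Fin n → ℕ => snocN g c) := by
  intro a b hab
  funext i
  rcases i with ⟨iv, hiv⟩
  have h2 : snocN a c ⟨iv, by omega⟩ = snocN b c ⟨iv, by omega⟩ := congrFun hab ⟨iv, by omega⟩
  rwa [snocN_lt a c iv hiv (by omega), snocN_lt b c iv hiv (by omega)] at h2

lemma snocN_mem_iff (d l : ℕ) (g : Fin (l + 1) → ℕ) (c : ℕ) :
    snocN g c ∈ dIncSet d (l + 2) ↔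
      g ∈ dIncSet d (l + 1) ∧ g (Fin.last l) < c + d ∧ c ≤ l + 1 := by
  constructor
  · rintro ⟨h0, h1⟩
    have hA : ∀ h : 0 < l + 1, g ⟨0, h⟩ = 0 := by
      intro h
      have := h0 (Nat.zero_lt_succ _)
      rwa [snocN_lt g c 0 (Nat.zero_lt_succ _)] at this
    have hB : ∀ (i : ℕ) (h : i + 1 < l + 1),
        (g ⟨i, Nat.lt_of_succ_lt h⟩ : ℤ) - d < g ⟨i + 1, h⟩ ∧ g ⟨i + 1, h⟩ ≤ i + 1 := by
      intro i hi
      have := h1 i (Nat.lt_succ_of_lt hi)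
      rwa [snocN_lt g c i (Nat.lt_of_succ_lt hi), snocN_lt g c (i + 1) hi] at this
    have hlast := h1 l (Nat.lt_succ_self _)
    rw [snocN_lt g c l (Nat.lt_succ_self _), snocN_last] at hlast
    have hC : (g (Fin.last l) : ℤ) - d < c := hlast.1
    have hD : c ≤ l + 1 := hlast.2
    clear hlast h0 h1
    exact ⟨⟨hA, hB⟩, by omega, hD⟩
  · rintro ⟨⟨h0, h1⟩, hlt, hle⟩
    refine ⟨fun h => ?_, fun i hi => ?_⟩
    · rw [snocN_lt g c 0 (Nat.zero_lt_succ _)]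
      exact h0 (Nat.zero_lt_succ _)
    · by_cases hi' : i + 1 < l + 1
      · rw [snocN_lt g c i (Nat.lt_of_succ_lt hi'), snocN_lt g c (i + 1) hi']
        exact h1 i hi'
      · have hil : i = l := by omega
        subst hil
        rw [snocN_lt g c i (Nat.lt_succ_self _), snocN_last]
        refine ⟨?_, hle⟩
        show (g (Fin.last i) : ℤ) - d < c
        omega

lemma eq_snocN {l : ℕ} (f : Fin (l + 2) → ℕ) :
    f = snocN (fun i : Fin (l + 1) => f ⟨i.val, Nat.lt_succ_of_lt i.isLt⟩)
        (f (Fin.last (l + 1))) := by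
  funext i
  rcases i with ⟨iv, hiv⟩
  by_cases h : iv < l + 1
  · rw [snocN_lt _ _ iv h]
  · have : iv = l + 1 := by omega
    subst this
    rw [snocN_last]
    rfl

lemma dIncSet_one (d : ℕ) : dIncSet d 1 = {fun _ => 0} := by
  ext f
  constructor
  · rintro ⟨h0, -⟩
    have hf := h0 (by omega)
    refine Set.mem_singleton_iff.mpr (funext fun i => ?_)
    have : i = ⟨0, by omega⟩ := by
      rcases i with ⟨iv, hiv⟩; exact Fin.ext (by omega)
    rw [this, hf]
  · rintro rfl
    exact ⟨fun _ => rfl, fun i hi => absurd hi (by omega)⟩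

lemma count_eq (d m c : ℕ) :
    {f ∈ dIncSet d (m + 1) | f (Fin.last m) = c}.ncard
      = if c ≤ m then KK d m (c + d) else 0 := by
  split_ifs with hc
  · rcases m with _ | l
    · have hc0 : c = 0 := by omega
      subst hc0
      have hset : {f ∈ dIncSet d 1 | f (Fin.last 0) = 0} = {fun _ => 0} := by
        rw [dIncSet_one]
        ext f
        constructor
        · rintro ⟨hf, -⟩; exact hf
        · rintro rfl; exact ⟨rfl, rfl⟩
      rw [hset, Set.ncard_singleton, KK_zero]
    · have hset : {f ∈ dIncSet d (l + 2) | f (Fin.last (l + 1)) = c}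
          = (fun g : Fin (l + 1) → ℕ => snocN g c) ''
              {g ∈ dIncSet d (l + 1) | g (Fin.last l) < c + d} := by
        ext f
        constructor
        · rintro ⟨hf, hlast⟩
          set g : Fin (l + 1) → ℕ := fun i : Fin (l + 1) => f ⟨i.val, Nat.lt_succ_of_lt i.isLt⟩ with hg
          have hfs : f = snocN g c := by rw [← hlast]; exact eq_snocN f
          have hf' : snocN g c ∈ dIncSet d (l + 2) := hfs ▸ hf
          obtain ⟨h1, h2, -⟩ := (snocN_mem_iff d l g c).mp hf'
          exact ⟨g, ⟨h1, h2⟩, hfs.symm⟩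
        · rintro ⟨g, ⟨hg, hglt⟩, rfl⟩
          exact ⟨(snocN_mem_iff d l g c).mpr ⟨hg, hglt, hc⟩, snocN_last _ _ _⟩
      rw [hset, Set.ncard_image_of_injective _ (snocN_inj c), KK_succ_def]
  · have hset : {f ∈ dIncSet d (m + 1) | f (Fin.last m) = c} = ∅ := by
      ext f
      simp only [Set.mem_setOf_eq, Set.mem_empty_iff_false, iff_false, not_and]
      intro hf heq
      have := last_le hf
      omega
    rw [hset, Set.ncard_empty]

lemma KK_succ (d m w : ℕ) :
    KK d (m + 1) (w + 1) = KK d (m + 1) w + if w ≤ m then KK d m (w + d) else 0 := by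
  rw [← count_eq d m w, KK_succ_def, KK_succ_def]
  have hsplit : {f ∈ dIncSet d (m + 1) | f (Fin.last m) < w + 1}
      = {f ∈ dIncSet d (m + 1) | f (Fin.last m) < w}
        ∪ {f ∈ dIncSet d (m + 1) | f (Fin.last m) = w} := by
    ext f
    simp only [Set.mem_setOf_eq, Set.mem_union]
    constructor
    · rintro ⟨hf, hlt⟩
      rcases Nat.lt_succ_iff_lt_or_eq.mp hlt with h | h
      · exact Or.inl ⟨hf, h⟩
      · exact Or.inr ⟨hf, h⟩
    · rintro (⟨hf, h⟩ | ⟨hf, h⟩)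
      · exact ⟨hf, by omega⟩
      · exact ⟨hf, by omega⟩
  rw [hsplit, Set.ncard_union_eq
    (Set.disjoint_left.mpr (by rintro f ⟨-, hlt⟩ ⟨-, heq⟩; omega))
    ((dInc_finite d (m + 1)).subset (fun x hx => hx.1))
    ((dInc_finite d (m + 1)).subset (fun x hx => hx.1))]

lemma KK_sum (d m : ℕ) : ∀ w, KK d (m + 1) w = ∑ c ∈ range (min w (m + 1)), KK d m (c + d) := by
  intro w
  induction w with
  | zero =>
    have : {f ∈ dIncSet d (m + 1) | f (Fin.last m) < 0} = ∅ := by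
      ext f; simp
    rw [KK_succ_def, this, Set.ncard_empty]
    simp
  | succ w ih =>
    rw [KK_succ, ih]
    by_cases hw : w ≤ m
    · have h1 : min (w + 1) (m + 1) = w + 1 := by omega
      have h2 : min w (m + 1) = w := by omega
      rw [if_pos hw, h1, h2, sum_range_succ]
    · have h1 : min (w + 1) (m + 1) = m + 1 := by omega
      have h2 : min w (m + 1) = m + 1 := by omega
      rw [if_neg hw, h1, h2, add_zero]

lemma II_zero (d : ℕ) : II d 0 = 1 := by
  have huniv : dIncSet d 0 = Set.univ := by
    ext f
    constructor
    · intro _; trivial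
    · intro _
      exact ⟨fun h => absurd h (by omega), fun i hi => absurd hi (by omega)⟩
  rw [II, huniv, Set.ncard_univ]
  exact Nat.card_unique

lemma KK_stab (d m w : ℕ) (h : m ≤ w) : KK d m w = II d m := by
  rcases m with _ | l
  · rw [KK_zero, II_zero]
  · rw [KK_succ_def, II]
    congr 1
    ext f
    simp only [Set.mem_setOf_eq]
    constructor
    · exact fun hf => hf.1
    · intro hf
      exact ⟨hf, lt_of_le_of_lt (last_le hf) (by omega)⟩

end DIncAux

namespace DIncAux

lemma hockey (s a : ℕ) : ∀ b, ∑ q ∈ Ico a b, ((q - a + s).choose s) = ((b + s) - a).choose (s + 1) := by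
  intro b
  induction b with
  | zero =>
    rw [Finset.Ico_eq_empty (by omega), Finset.sum_empty,
      Nat.choose_eq_zero_of_lt (by omega)]
  | succ b ih =>
    rcases le_or_gt a b with hab | hab
    · rw [Finset.sum_Ico_succ_top hab, ih]
      have h1 : (b + s) - a = b - a + s := by omega
      have h2 : (b + 1 + s) - a = (b - a + s) + 1 := by omega
      rw [h1, h2, Nat.choose_succ_succ, add_comm]
    · rw [Finset.Ico_eq_empty (by omega), Finset.sum_empty,
        Nat.choose_eq_zero_of_lt (by omega)]

lemma sum_shift (p M dd : ℕ) (f : ℕ → ℤ) :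
    ∑ c ∈ Ico p M, f (c + dd) = ∑ q ∈ Ico (p + dd) (M + dd), f q := by
  rw [Finset.sum_Ico_eq_sum_range, Finset.sum_Ico_eq_sum_range]
  rw [show M + dd - (p + dd) = M - p by omega]
  exact Finset.sum_congr rfl fun k _ => by congr 1; omega

lemma sum_drop (A B B' : ℕ) (f : ℕ → ℤ) (hB : B' ≤ B) (hz : ∀ q, B' ≤ q → f q = 0) :
    ∑ q ∈ Ico A B, f q = ∑ q ∈ Ico A B', f q := by
  rcases le_or_gt A B' with hA | hA
  · rw [← Finset.sum_Ico_consecutive f hA hB,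
      Finset.sum_eq_zero fun q hq => hz q (Finset.mem_Ico.mp hq).1, add_zero]
  · rw [Finset.Ico_eq_empty (show ¬A < B' by omega), Finset.sum_empty]
    exact Finset.sum_eq_zero fun q hq => hz q (le_trans (le_of_lt hA) (Finset.mem_Ico.mp hq).1)

noncomputable def Tz (d s m p : ℕ) : ℤ :=
  ∑ q ∈ Ico p m, ((q - p + s).choose s : ℤ) * ((II d m : ℤ) - (KK d m q : ℤ))

noncomputable def Uz (d s m p : ℕ) : ℤ :=
  ∑ j ∈ range m, (-1) ^ j * (((m + d + s + 1) - (j * d + d + p)).choose (j + s + 2) : ℤ)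
      * (II d (m - 1 - j) : ℤ)

lemma IK_zero (d m q : ℕ) (h : m ≤ q) : (II d m : ℤ) - (KK d m q : ℤ) = 0 := by
  rw [KK_stab d m q h]; ring

lemma TU (d m : ℕ) : ∀ s p, Tz d s m p = Uz d s m p := by
  induction m with
  | zero =>
    intro s p
    rw [Tz, Uz, Finset.Ico_eq_empty (by omega)]
    simp
  | succ m ih =>
    intro s p
    have hIK : ∀ q, q < m + 1 → ((II d (m + 1) : ℤ) - (KK d (m + 1) q : ℤ))
        = ∑ c ∈ Ico q (m + 1), (KK d m (c + d) : ℤ) := by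
      intro q hq
      have h1 : II d (m + 1) = ∑ c ∈ range (m + 1), KK d m (c + d) := by
        rw [← KK_stab d (m + 1) (m + 1) le_rfl, KK_sum, min_self]
      have h2 : KK d (m + 1) q = ∑ c ∈ range q, KK d m (c + d) := by
        rw [KK_sum, show min q (m + 1) = q by omega]
      have h3 : (∑ c ∈ Ico 0 q, (KK d m (c + d) : ℤ))
          + ∑ c ∈ Ico q (m + 1), (KK d m (c + d) : ℤ)
          = ∑ c ∈ Ico 0 (m + 1), (KK d m (c + d) : ℤ) :=
        Finset.sum_Ico_consecutive _ (Nat.zero_le q) (show q ≤ m + 1 by omega)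
      rw [h1, h2, Nat.cast_sum, Nat.cast_sum, range_eq_Ico, range_eq_Ico]
      linarith [h3]
    calc Tz d s (m + 1) p
        = ∑ q ∈ Ico p (m + 1), ∑ c ∈ Ico q (m + 1),
            ((q - p + s).choose s : ℤ) * (KK d m (c + d) : ℤ) := by
          rw [Tz]
          refine Finset.sum_congr rfl fun q hq => ?_
          rw [hIK q (Finset.mem_Ico.mp hq).2, Finset.mul_sum]
      _ = ∑ c ∈ Ico p (m + 1), ∑ q ∈ Ico p (c + 1),
            ((q - p + s).choose s : ℤ) * (KK d m (c + d) : ℤ) :=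
          Finset.sum_Ico_Ico_comm p (m + 1) _
      _ = ∑ c ∈ Ico p (m + 1), (((c + 1 + s) - p).choose (s + 1) : ℤ) * (KK d m (c + d) : ℤ) := by
          refine Finset.sum_congr rfl fun c hc => ?_
          rw [← Finset.sum_mul]
          congr 1
          rw [← Nat.cast_sum]
          exact congrArg (Nat.cast : ℕ → ℤ) (hockey s p (c + 1))
      _ = (∑ c ∈ Ico p (m + 1), (((c + 1 + s) - p).choose (s + 1) : ℤ)) * (II d m : ℤ)
          - ∑ c ∈ Ico p (m + 1), (((c + 1 + s) - p).choose (s + 1) : ℤ)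
              * ((II d m : ℤ) - (KK d m (c + d) : ℤ)) := by
          rw [Finset.sum_mul, ← Finset.sum_sub_distrib]
          exact Finset.sum_congr rfl fun c _ => by ring
      _ = ((((m + 1) + s + 1) - p).choose (s + 2) : ℤ) * (II d m : ℤ)
            - Tz d (s + 1) m (p + d) := by
          congr 1
          · congr 1
            rw [← Nat.cast_sum]
            have h1 : ∑ c ∈ Ico p (m + 1), ((c + 1 + s) - p).choose (s + 1)
                = ∑ c ∈ Ico p (m + 1), ((c - p + (s + 1)).choose (s + 1)) :=
              Finset.sum_congr rfl fun c hc => by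
                have := (Finset.mem_Ico.mp hc).1; congr 1; omega
            rw [h1, hockey (s + 1) p (m + 1)]
            norm_cast
          · have h2 : ∑ c ∈ Ico p (m + 1), (((c + 1 + s) - p).choose (s + 1) : ℤ)
                * ((II d m : ℤ) - (KK d m (c + d) : ℤ))
                = ∑ q ∈ Ico (p + d) ((m + 1) + d), (((q + 1 + s) - (p + d)).choose (s + 1) : ℤ)
                    * ((II d m : ℤ) - (KK d m q : ℤ)) := by
              rw [← sum_shift p (m + 1) d
                (fun q => (((q + 1 + s) - (p + d)).choose (s + 1) : ℤ)
                  * ((II d m : ℤ) - (KK d m q : ℤ)))]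
              refine Finset.sum_congr rfl fun c _ => ?_
              have e : (c + d + 1 + s) - (p + d) = (c + 1 + s) - p := by omega
              rw [e]
            rw [h2, sum_drop (p + d) ((m + 1) + d) m _ (by omega)
               (fun q hq => by rw [IK_zero d m q hq, mul_zero]), Tz]
            refine Finset.sum_congr rfl fun q hq => ?_
            have hpq := (Finset.mem_Ico.mp hq).1
            have e : (q + 1 + s) - (p + d) = q - (p + d) + (s + 1) := by omega
            rw [e]
      _ = ((((m + 1) + s + 1) - p).choose (s + 2) : ℤ) * (II d m : ℤ)
            - Uz d (s + 1) m (p + d) := by rw [ih (s + 1) (p + d)]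
      _ = Uz d s (m + 1) p := by
          have hhead : (-1 : ℤ) ^ 0
              * ((((m + 1) + d + s + 1) - (0 * d + d + p)).choose (0 + s + 2) : ℤ)
              * (II d ((m + 1) - 1 - 0) : ℤ)
              = ((((m + 1) + s + 1) - p).choose (s + 2) : ℤ) * (II d m : ℤ) := by
            rw [pow_zero, one_mul]
            have e1 : ((m + 1) + d + s + 1) - (0 * d + d + p) = ((m + 1) + s + 1) - p := by
              omega
            have e2 : (m + 1) - 1 - 0 = m := by omega
            have e3 : 0 + s + 2 = s + 2 := by omega
            rw [e1, e2, e3]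
          have htail : ∑ j ∈ range m, (-1 : ℤ) ^ (j + 1)
              * ((((m + 1) + d + s + 1) - ((j + 1) * d + d + p)).choose ((j + 1) + s + 2) : ℤ)
              * (II d ((m + 1) - 1 - (j + 1)) : ℤ) = - Uz d (s + 1) m (p + d) := by
            rw [Uz, ← Finset.sum_neg_distrib]
            refine Finset.sum_congr rfl fun j _ => ?_
            have e1 : ((m + 1) + d + s + 1) - ((j + 1) * d + d + p)
                = (m + d + (s + 1) + 1) - (j * d + d + (p + d)) := by
              congr 1 <;> ring
            have e2 : (m + 1) - 1 - (j + 1) = m - 1 - j := by omega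
            have e3 : (j + 1) + s + 2 = j + (s + 1) + 2 := by omega
            rw [e1, e2, e3, pow_succ]
            ring
          have hU : Uz d s (m + 1) p = (∑ j ∈ range m, (-1 : ℤ) ^ (j + 1)
              * ((((m + 1) + d + s + 1) - ((j + 1) * d + d + p)).choose ((j + 1) + s + 2) : ℤ)
              * (II d ((m + 1) - 1 - (j + 1)) : ℤ))
              + (-1 : ℤ) ^ 0
                * ((((m + 1) + d + s + 1) - (0 * d + d + p)).choose (0 + s + 2) : ℤ)
                * (II d ((m + 1) - 1 - 0) : ℤ) :=
            Finset.sum_range_succ' _ m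
          rw [hU, hhead, htail]
          ring

end DIncAux

namespace DIncAux

lemma sum_Icc_one (M : ℕ) (f : ℕ → ℤ) : ∑ k ∈ Icc 1 M, f k = ∑ j ∈ range M, f (j + 1) := by
  rw [← Finset.Ico_add_one_right_eq_Icc, Finset.sum_Ico_eq_sum_range]
  rw [show M + 1 - 1 = M by omega]
  exact Finset.sum_congr rfl fun j _ => by rw [add_comm]

lemma main_calc (d m : ℕ) :
    (II d (m + 1) : ℤ) = (m + 1 : ℤ) * (II d m : ℤ) - Uz d 0 m d := by
  have h1 : II d (m + 1) = ∑ c ∈ range (m + 1), KK d m (c + d) := by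
    rw [← KK_stab d (m + 1) (m + 1) le_rfl, KK_sum, min_self]
  have h2 : (II d (m + 1) : ℤ)
      = ∑ c ∈ range (m + 1), ((II d m : ℤ) - ((II d m : ℤ) - (KK d m (c + d) : ℤ))) := by
    rw [h1, Nat.cast_sum]
    exact Finset.sum_congr rfl fun c _ => by ring
  have h4 : ∑ c ∈ range (m + 1), ((II d m : ℤ) - (KK d m (c + d) : ℤ))
      = ∑ q ∈ Ico d (m + 1 + d), ((II d m : ℤ) - (KK d m q : ℤ)) := by
    rw [range_eq_Ico, sum_shift 0 (m + 1) d (fun q => (II d m : ℤ) - (KK d m q : ℤ)),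
      zero_add]
  have h5 : ∑ c ∈ range (m + 1), ((II d m : ℤ) - (KK d m (c + d) : ℤ)) = Uz d 0 m d := by
    rw [h4, sum_drop d (m + 1 + d) m _ (by omega) (fun q hq => IK_zero d m q hq), ← TU d m 0 d,
      Tz]
    exact Finset.sum_congr rfl fun q _ => by rw [Nat.choose_zero_right]; push_cast; ring
  rw [h2, Finset.sum_sub_distrib, Finset.sum_const, card_range, nsmul_eq_mul, h5]
  push_cast
  ring

end DIncAux

/-- The recursion i_n = Σ_{k ≥ 1} (-1)^{k-1} binom(n - kd + d, k) i_{n-k} for n ≥ 1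
(terms with k > n vanish, and i_0 = 1 holds by definition). -/
theorem dInc_card_recursion (d n : ℕ) (hn : 1 ≤ n) :
    ((dIncSet d n).ncard : ℤ) =
      ∑ k ∈ Finset.Icc 1 n,
        (-1 : ℤ) ^ (k - 1) * (n + d - k * d : ℕ).choose k * (dIncSet d (n - k)).ncard := by
  open DIncAux in
  obtain ⟨m, rfl⟩ : ∃ m, n = m + 1 := ⟨n - 1, by omega⟩
  have hL : ((dIncSet d (m + 1)).ncard : ℤ) = (m + 1 : ℤ) * (II d m : ℤ) - Uz d 0 m d :=
    main_calc d m
  rw [hL, sum_Icc_one (m + 1) _, Finset.sum_range_succ']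
  have hhead : (-1 : ℤ) ^ (0 + 1 - 1) * (((m + 1) + d - (0 + 1) * d : ℕ).choose (0 + 1) : ℤ)
      * ((dIncSet d ((m + 1) - (0 + 1))).ncard : ℤ) = (m + 1 : ℤ) * (II d m : ℤ) := by
    have e1 : (m + 1) + d - (0 + 1) * d = m + 1 := by omega
    have e2 : (m + 1) - (0 + 1) = m := by omega
    rw [e1, e2, Nat.choose_one_right]
    show (-1 : ℤ) ^ 0 * _ * _ = _
    rw [pow_zero, one_mul, II]
    push_cast
    ring
  have htail : ∑ j ∈ range m, (-1 : ℤ) ^ ((j + 1) + 1 - 1)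
      * ((((m + 1) + d - ((j + 1) + 1) * d : ℕ)).choose ((j + 1) + 1) : ℤ)
      * ((dIncSet d ((m + 1) - ((j + 1) + 1))).ncard : ℤ) = - Uz d 0 m d := by
    rw [Uz, ← Finset.sum_neg_distrib]
    refine Finset.sum_congr rfl fun j _ => ?_
    have e1 : (m + 1) + d - ((j + 1) + 1) * d = (m + d + 0 + 1) - (j * d + d + d) := by
      congr 1 <;> ring
    have e2 : (m + 1) - ((j + 1) + 1) = m - 1 - j := by omega
    have e3 : (j + 1) + 1 - 1 = j + 1 := by omega
    have e4 : (j + 1) + 1 = j + 0 + 2 := by omega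
    rw [e1, e2, e3, e4, pow_succ, II]
    ring
  rw [hhead, htail]
  ring
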